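/- Let μ_n = (1/F_{n-1})·∑_{k=0}^{⌊(n-1)/2⌋} (k+1)·C(n-1-k, k) and let σ_n² = (1/F_{n-1})·∑_{k=0}^{⌊(n-1)/2⌋} (k+1)²·C(n-1-k, k) - μ_n² be the variance of the number of summands in the Zeckendorf decompositions of integers in [F_n, F_{n+1}). Then, as n → ∞, σ_n² - n/(5√5) converges to -2/25. -/

import Mathlib

open Filter

namespace ZeckAux

open Finset Nat

/-- Generic weighted diagonal-binomial sum. -/
def zSum (w : ℕ → ℕ) (m : ℕ) : ℕ := ∑ k ∈ range (m + 1), w k * ((m - k).choose k)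

lemma zSum_rec (w : ℕ → ℕ) (m : ℕ) :
    zSum w (m + 2) = zSum w (m + 1) + zSum (fun k => w (k + 1)) m := by
  unfold zSum
  rw [Finset.sum_range_succ' (fun k => w k * ((m + 2 - k).choose k)) (m + 2),
      Finset.sum_range_succ' (fun k => w k * ((m + 1 - k).choose k)) (m + 1)]
  simp only [Nat.sub_zero, Nat.choose_zero_right, mul_one]
  rw [Finset.sum_range_succ]
  have h0 : (m + 2 - (m + 1 + 1)).choose (m + 1 + 1) = 0 := by
    simp [Nat.choose_eq_zero_of_lt]
  rw [h0, mul_zero, add_zero]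
  have : ∀ k ∈ range (m + 1),
      w (k + 1) * ((m + 2 - (k + 1)).choose (k + 1))
        = w (k + 1) * ((m - k).choose k) + w (k + 1) * ((m + 1 - (k + 1)).choose (k + 1)) := by
    intro k hk
    rw [Finset.mem_range] at hk
    have h1 : m + 2 - (k + 1) = (m - k) + 1 := by omega
    have h2 : m + 1 - (k + 1) = m - k := by omega
    rw [h1, h2, Nat.choose_succ_succ, mul_add, add_comm]
  rw [Finset.sum_congr rfl this, Finset.sum_add_distrib]
  ring

def sF (m : ℕ) : ℕ := zSum (fun _ => 1) m
def sA (m : ℕ) : ℕ := zSum (fun k => k + 1) m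
def sB (m : ℕ) : ℕ := zSum (fun k => (k + 1) ^ 2) m

lemma sF_rec (m : ℕ) : sF (m + 2) = sF (m + 1) + sF m := zSum_rec _ m

lemma sA_rec (m : ℕ) : sA (m + 2) = sA (m + 1) + (sA m + sF m) := by
  have h : zSum (fun k => k + 1 + 1) m = zSum (fun k => k + 1) m + zSum (fun _ => 1) m := by
    unfold zSum
    rw [← Finset.sum_add_distrib]
    exact Finset.sum_congr rfl fun k _ => by ring
  rw [sF, sA, sA, sA, zSum_rec, h]

lemma sB_rec (m : ℕ) : sB (m + 2) = sB (m + 1) + (sB m + 2 * sA m + sF m) := by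
  have h : zSum (fun k => (k + 1 + 1) ^ 2) m
      = zSum (fun k => (k + 1) ^ 2) m + 2 * zSum (fun k => k + 1) m + zSum (fun _ => 1) m := by
    unfold zSum
    rw [Finset.mul_sum, ← Finset.sum_add_distrib, ← Finset.sum_add_distrib]
    exact Finset.sum_congr rfl fun k _ => by ring
  rw [sB, sB, sB, sA, sF, zSum_rec, h]

lemma sF_eq (m : ℕ) : sF m = fib (m + 1) := by
  induction m using Nat.twoStepInduction with
  | zero => decide
  | one => decide
  | more m ih1 ih2 =>
    have h : fib (m + 2 + 1) = fib (m + 1) + fib (m + 1 + 1) := by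
      rw [show m + 2 + 1 = (m + 1) + 2 from rfl]; exact fib_add_two
    rw [sF_rec, ih1, ih2, h, Nat.add_comm]

lemma sA_eq (m : ℕ) : 5 * sA m + (m + 1) * fib m = (2 * m + 5) * fib (m + 1) := by
  induction m using Nat.twoStepInduction with
  | zero => decide
  | one => decide
  | more m ih1 ih2 =>
    have key : (5 * sA (m + 2) + (m + 2 + 1) * fib (m + 2) : ℤ)
        = (2 * (m + 2) + 5) * fib (m + 2 + 1) := by
      have hA : (sA (m + 2) : ℤ) = sA (m + 1) + (sA m + fib (m + 1)) := by
        rw [sA_rec, sF_eq]; push_cast; ring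
      have h3 : (fib (m + 2) : ℤ) = fib (m + 1) + fib m := by
        rw [fib_add_two]; push_cast; ring
      have h4 : (fib (m + 3) : ℤ) = fib (m + 2) + fib (m + 1) := by
        rw [fib_add_two]; push_cast; ring
      have H1 : (5 * sA m + (m + 1) * fib m : ℤ) = (2 * m + 5) * fib (m + 1) := by
        exact_mod_cast congrArg (Nat.cast : ℕ → ℤ) ih1
      have H2 : (5 * sA (m + 1) + (m + 1 + 1) * fib (m + 1) : ℤ)
          = (2 * (m + 1) + 5) * fib (m + 1 + 1) := by
        exact_mod_cast congrArg (Nat.cast : ℕ → ℤ) ih2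
      -- cast already normal
      push_cast at H1 H2
      linear_combination 5 * hA + H1 + H2 + ((m : ℤ) + 1) * h3 - (2 * (m : ℤ) + 9) * h4
    exact_mod_cast key

lemma sB_eq (m : ℕ) : 25 * sB m + (5 * m ^ 2 + 14 * m + 9) * fib m
    = (5 * m ^ 2 + 23 * m + 25) * fib (m + 1) := by
  induction m using Nat.twoStepInduction with
  | zero => decide
  | one => decide
  | more m ih1 ih2 =>
    have key : (25 * sB (m + 2) + (5 * (m + 2) ^ 2 + 14 * (m + 2) + 9) * fib (m + 2) : ℤ)
        = (5 * (m + 2) ^ 2 + 23 * (m + 2) + 25) * fib (m + 2 + 1) := by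
      have hB : (sB (m + 2) : ℤ) = sB (m + 1) + (sB m + 2 * sA m + fib (m + 1)) := by
        rw [sB_rec, sF_eq]; push_cast; ring
      have h3 : (fib (m + 2) : ℤ) = fib (m + 1) + fib m := by
        rw [fib_add_two]; push_cast; ring
      have h4 : (fib (m + 3) : ℤ) = fib (m + 2) + fib (m + 1) := by
        rw [fib_add_two]; push_cast; ring
      have La : (5 * sA m + (m + 1) * fib m : ℤ) = (2 * m + 5) * fib (m + 1) := by
        exact_mod_cast congrArg (Nat.cast : ℕ → ℤ) (sA_eq m)
      have H1 : (25 * sB m + (5 * m ^ 2 + 14 * m + 9) * fib m : ℤ)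
          = (5 * m ^ 2 + 23 * m + 25) * fib (m + 1) := by
        exact_mod_cast congrArg (Nat.cast : ℕ → ℤ) ih1
      have H2 : (25 * sB (m + 1) + (5 * (m + 1) ^ 2 + 14 * (m + 1) + 9) * fib (m + 1) : ℤ)
          = (5 * (m + 1) ^ 2 + 23 * (m + 1) + 25) * fib (m + 1 + 1) := by
        exact_mod_cast congrArg (Nat.cast : ℕ → ℤ) ih2
      -- cast already normal
      push_cast at H1 H2
      linear_combination 25 * hB + H1 + H2 + 10 * La
        + (5 * (m : ℤ) ^ 2 + 24 * m + 19) * h3 - (5 * (m : ℤ) ^ 2 + 43 * m + 91) * h4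
    exact_mod_cast key

/-- Range-extension for the weighted sums (extra terms vanish). -/
lemma sum_half_eq (m : ℕ) (g : ℕ → ℝ) :
    ∑ k ∈ range (m / 2 + 1), g k * ((m - k).choose k : ℝ)
      = ∑ k ∈ range (m + 1), g k * ((m - k).choose k : ℝ) := by
  apply Finset.sum_subset
  · exact Finset.range_subset_range.2 (by omega)
  · intro k hk hk'
    rw [Finset.mem_range] at hk hk'
    have : m - k < k := by omega
    rw [Nat.choose_eq_zero_of_lt this]
    simp

lemma castA (m : ℕ) :
    ∑ k ∈ range (m / 2 + 1), ((k : ℝ) + 1) * ((m - k).choose k : ℝ) = (sA m : ℝ) := by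
  rw [sum_half_eq m (fun k => (k : ℝ) + 1), sA, zSum]
  push_cast
  ring

lemma castB (m : ℕ) :
    ∑ k ∈ range (m / 2 + 1), ((k : ℝ) + 1) ^ 2 * ((m - k).choose k : ℝ) = (sB m : ℝ) := by
  rw [sum_half_eq m (fun k => ((k : ℝ) + 1) ^ 2), sB, zSum]
  push_cast
  ring

/-- The golden-ratio error of Fibonacci ratios. -/
lemma fib_gold (m : ℕ) : (Nat.fib m : ℝ) - (Real.sqrt 5 - 1) / 2 * (Nat.fib (m + 1) : ℝ)
    = (-((Real.sqrt 5 - 1) / 2)) ^ (m + 1) := by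
  have hs : Real.sqrt 5 ^ 2 = 5 := Real.sq_sqrt (by norm_num)
  induction m with
  | zero => simp
  | succ m ih =>
    have h2 : (Nat.fib (m + 2) : ℝ) = Nat.fib m + Nat.fib (m + 1) := by
      rw [Nat.fib_add_two]; push_cast; ring
    rw [h2, pow_succ]
    linear_combination (-((Real.sqrt 5 - 1) / 2)) * ih
      - ((Nat.fib (m + 1) : ℝ) / 4) * hs

/-- Pure algebra key identity. -/
lemma key_identity (s r mm : ℝ) (hs : s ^ 2 = 5) :
    (5 * mm ^ 2 + 23 * mm + 25 - (5 * mm ^ 2 + 14 * mm + 9) * r) / 25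
        - ((2 * mm + 5 - (mm + 1) * r) / 5) ^ 2 - (mm + 1) * s / 25
      = -2 / 25 + (r - (s - 1) / 2)
          * (1 - mm ^ 2 - (mm + 1) ^ 2 * (r + (s - 1) / 2)) / 25 := by
  linear_combination (-(mm + 1) ^ 2 / 100) * hs

end ZeckAux

/-- `μ n` is the mean number of summands in Zeckendorf decompositions of
integers in `[F_n, F_{n+1})`; here `F_{n-1} = fib n` in the standard convention. -/
noncomputable def zeckMean (n : ℕ) : ℝ :=
  (∑ k ∈ Finset.range ((n - 1) / 2 + 1),
      ((k : ℝ) + 1) * (Nat.choose (n - 1 - k) k : ℝ)) / (Nat.fib n : ℝ)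

/-- `σ² n` is the variance of the number of summands in Zeckendorf
decompositions of integers in `[F_n, F_{n+1})`. -/
noncomputable def zeckVar (n : ℕ) : ℝ :=
  (∑ k ∈ Finset.range ((n - 1) / 2 + 1),
      ((k : ℝ) + 1) ^ 2 * (Nat.choose (n - 1 - k) k : ℝ)) / (Nat.fib n : ℝ)
    - (zeckMean n) ^ 2

open ZeckAux in
/-- The variance of the number of Zeckendorf summands satisfies
`σ_n² - n/(5√5) → -2/25` as `n → ∞`. -/
theorem zeckendorf_variance :
    Tendsto (fun n : ℕ => zeckVar n - (n : ℝ) / (5 * Real.sqrt 5))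
      atTop (nhds (-2 / 25)) := by
  have hs : Real.sqrt 5 ^ 2 = 5 := Real.sq_sqrt (by norm_num)
  have hs0 : (0 : ℝ) < Real.sqrt 5 := Real.sqrt_pos.2 (by norm_num)
  set s : ℝ := Real.sqrt 5 with hsdef
  set ρ : ℝ := (s - 1) / 2 with hρdef
  have hρ0 : 0 < ρ := by rw [hρdef]; nlinarith
  have hρ1 : ρ < 1 := by rw [hρdef]; nlinarith
  set E : ℕ → ℝ := fun m =>
    ((Nat.fib m : ℝ) / (Nat.fib (m + 1) : ℝ) - ρ) *
      (1 - (m : ℝ) ^ 2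
        - ((m : ℝ) + 1) ^ 2 * ((Nat.fib m : ℝ) / (Nat.fib (m + 1) : ℝ) + ρ)) / 25 with hE
  rw [← Filter.tendsto_add_atTop_iff_nat 1]
  have heq : ∀ m : ℕ,
      zeckVar (m + 1) - ((m + 1 : ℕ) : ℝ) / (5 * s) = -2 / 25 + E m := by
    intro m
    have hF' : (0 : ℝ) < (Nat.fib (m + 1) : ℝ) := by
      exact_mod_cast Nat.fib_pos.2 (Nat.succ_pos m)
    have hAR : 5 * (sA m : ℝ) + ((m : ℝ) + 1) * (Nat.fib m : ℝ)
        = (2 * (m : ℝ) + 5) * (Nat.fib (m + 1) : ℝ) := by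
      exact_mod_cast congrArg (Nat.cast : ℕ → ℝ) (sA_eq m)
    have hBR : 25 * (sB m : ℝ) + (5 * (m : ℝ) ^ 2 + 14 * (m : ℝ) + 9) * (Nat.fib m : ℝ)
        = (5 * (m : ℝ) ^ 2 + 23 * (m : ℝ) + 25) * (Nat.fib (m + 1) : ℝ) := by
      exact_mod_cast congrArg (Nat.cast : ℕ → ℝ) (sB_eq m)
    have h5 : zeckVar (m + 1)
        = (sB m : ℝ) / (Nat.fib (m + 1) : ℝ) - ((sA m : ℝ) / (Nat.fib (m + 1) : ℝ)) ^ 2 := by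
      rw [zeckVar, zeckMean]
      simp only [Nat.add_sub_cancel]
      rw [castA, castB]
    have h1 : (sB m : ℝ) / (Nat.fib (m + 1) : ℝ)
        = (5 * (m : ℝ) ^ 2 + 23 * (m : ℝ) + 25
            - (5 * (m : ℝ) ^ 2 + 14 * (m : ℝ) + 9)
              * ((Nat.fib m : ℝ) / (Nat.fib (m + 1) : ℝ))) / 25 := by
      field_simp
      linear_combination hBR
    have h2 : (sA m : ℝ) / (Nat.fib (m + 1) : ℝ)
        = (2 * (m : ℝ) + 5
            - ((m : ℝ) + 1) * ((Nat.fib m : ℝ) / (Nat.fib (m + 1) : ℝ))) / 5 := by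
      field_simp
      linear_combination hAR
    have h3 : ((m + 1 : ℕ) : ℝ) / (5 * s) = ((m : ℝ) + 1) * s / 25 := by
      push_cast
      rw [div_eq_div_iff (by positivity) (by norm_num)]
      linear_combination (-5 * ((m : ℝ) + 1)) * hs
    rw [h5, h1, h2, h3, hE]
    exact key_identity s ((Nat.fib m : ℝ) / (Nat.fib (m + 1) : ℝ)) (m : ℝ) hs
  have hE0 : Tendsto E atTop (nhds 0) := by
    have hbase : Tendsto (fun n : ℕ => (n : ℝ) ^ 2 * ρ ^ n) atTop (nhds 0) :=
      tendsto_pow_const_mul_const_pow_of_lt_one 2 hρ0.le hρ1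
    have hshift : Tendsto (fun m : ℕ => ((m + 1 : ℕ) : ℝ) ^ 2 * ρ ^ (m + 1)) atTop (nhds 0) :=
      (Filter.tendsto_add_atTop_iff_nat 1).2 hbase
    have hc : Tendsto (fun m : ℕ => 3 / 25 * (((m + 1 : ℕ) : ℝ) ^ 2 * ρ ^ (m + 1)))
        atTop (nhds 0) := by
      simpa using hshift.const_mul (3 / 25 : ℝ)
    apply squeeze_zero_norm _ hc
    intro m
    have hF' : (0 : ℝ) < (Nat.fib (m + 1) : ℝ) := by
      exact_mod_cast Nat.fib_pos.2 (Nat.succ_pos m)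
    have hF1 : (1 : ℝ) ≤ (Nat.fib (m + 1) : ℝ) := by
      exact_mod_cast Nat.fib_pos.2 (Nat.succ_pos m)
    set r : ℝ := (Nat.fib m : ℝ) / (Nat.fib (m + 1) : ℝ) with hrdef
    have hr0 : 0 ≤ r := by positivity
    have hr1 : r ≤ 1 := by
      rw [hrdef, div_le_one hF']
      exact_mod_cast Nat.fib_le_fib_succ
    have hδeq : r - ρ = (-ρ) ^ (m + 1) / (Nat.fib (m + 1) : ℝ) := by
      rw [hrdef, div_sub' hF'.ne', ← fib_gold m]
      rw [hρdef, hsdef]; ring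
    have hδ : |r - ρ| ≤ ρ ^ (m + 1) := by
      rw [hδeq, abs_div, abs_pow, abs_neg, abs_of_pos hρ0, abs_of_pos hF']
      exact div_le_self (pow_nonneg hρ0.le _) hF1
    have hX : |1 - (m : ℝ) ^ 2 - ((m : ℝ) + 1) ^ 2 * (r + ρ)| ≤ 3 * ((m : ℝ) + 1) ^ 2 := by
      have hm0 : (0 : ℝ) ≤ (m : ℝ) := Nat.cast_nonneg m
      have ha : ((m : ℝ) + 1) ^ 2 * (r + ρ) ≤ ((m : ℝ) + 1) ^ 2 * 2 :=
        mul_le_mul_of_nonneg_left (by linarith) (sq_nonneg ((m : ℝ) + 1))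
      have hb : 0 ≤ ((m : ℝ) + 1) ^ 2 * (r + ρ) :=
        mul_nonneg (sq_nonneg ((m : ℝ) + 1)) (by linarith)
      rw [abs_le]
      constructor <;> nlinarith [sq_nonneg ((m : ℝ) + 1), sq_nonneg (m : ℝ)]
    have hEabs : ‖E m‖
        = |r - ρ| * |1 - (m : ℝ) ^ 2 - ((m : ℝ) + 1) ^ 2 * (r + ρ)| / 25 := by
      rw [hE, Real.norm_eq_abs]
      rw [abs_div, abs_mul]
      norm_num
      rfl
    rw [hEabs]
    push_cast
    calc |r - ρ| * |1 - (m : ℝ) ^ 2 - ((m : ℝ) + 1) ^ 2 * (r + ρ)| / 25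
        ≤ ρ ^ (m + 1) * (3 * ((m : ℝ) + 1) ^ 2) / 25 := by
          apply div_le_div_of_nonneg_right ?_ (by norm_num)
          exact mul_le_mul hδ hX (abs_nonneg _) (pow_nonneg hρ0.le _)
      _ = 3 / 25 * (((m : ℝ) + 1) ^ 2 * ρ ^ (m + 1)) := by ring
  have : Tendsto (fun m : ℕ => -2 / 25 + E m) atTop (nhds (-2 / 25)) := by
    simpa using tendsto_const_nhds.add hE0
  exact this.congr fun m => (heq m).symm
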